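/- For an odd prime d, the phase-space point operators A(p,q) = w(p,q) A w(p,q)†, with A = Σ_x |−x⟩⟨x|, form a Hermitian orthonormal family with respect to the inner product ⟨M,N⟩ = (1/d) Tr(M† N): each A(p,q) is Hermitian and (1/d)Tr[A(p,q)A(p',q')] = δ_{pp'}δ_{qq'}. -/

import Mathlib

open Matrix Kronecker BigOperators
open scoped ComplexOrder

noncomputable def omega_d (d : ℕ) : ℂ := Complex.exp (2 * Real.pi * Complex.I / d)

noncomputable def Xmat (d : ℕ) : Matrix (ZMod d) (ZMod d) ℂ :=
  Matrix.of fun k l => if k = l + 1 then 1 else 0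

noncomputable def Zmat (d : ℕ) : Matrix (ZMod d) (ZMod d) ℂ :=
  Matrix.diagonal fun k => omega_d d ^ k.val

noncomputable def weyl (d : ℕ) [NeZero d] (p q : ZMod d) : Matrix (ZMod d) (ZMod d) ℂ :=
  omega_d d ^ ((-(2⁻¹ : ZMod d) * p * q).val) • (Zmat d ^ p.val * Xmat d ^ q.val)

noncomputable def Amat (d : ℕ) : Matrix (ZMod d) (ZMod d) ℂ :=
  Matrix.of fun k l => if k = -l then 1 else 0

noncomputable def phasePoint (d : ℕ) [NeZero d] (p q : ZMod d) :
    Matrix (ZMod d) (ZMod d) ℂ := weyl d p q * Amat d * (weyl d p q)ᴴ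

section Aux

variable (d : ℕ) [NeZero d]

lemma omega_prim : IsPrimitiveRoot (omega_d d) d := by
  simpa [omega_d] using Complex.isPrimitiveRoot_exp d (NeZero.ne d)

lemma omega_pow_d : omega_d d ^ d = 1 := (omega_prim d).pow_eq_one

lemma omega_ne_zero : omega_d d ≠ 0 := by
  intro h
  have := omega_pow_d d
  rw [h, zero_pow (NeZero.ne d)] at this
  exact zero_ne_one this

lemma omega_pow_mod (n : ℕ) : omega_d d ^ (n % d) = omega_d d ^ n := by
  conv_rhs => rw [← Nat.mod_add_div n d]
  rw [pow_add, pow_mul, omega_pow_d, one_pow, mul_one]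

lemma conj_omega : (starRingEnd ℂ) (omega_d d) = (omega_d d)⁻¹ :=
  (Complex.inv_eq_conj (Complex.norm_eq_one_of_pow_eq_one (omega_pow_d d) (NeZero.ne d))).symm

/-- The additive character `x ↦ ω^x`. -/
noncomputable def ec (x : ZMod d) : ℂ := omega_d d ^ x.val

lemma ec_natCast (n : ℕ) : ec d (n : ZMod d) = omega_d d ^ n := by
  rw [ec, ZMod.val_natCast, omega_pow_mod]

lemma ec_zero : ec d 0 = 1 := by
  simpa using ec_natCast d 0

lemma ec_add (x y : ZMod d) : ec d (x + y) = ec d x * ec d y := by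
  rw [ec, ZMod.val_add, omega_pow_mod, pow_add]; rfl

lemma ec_ne_zero (x : ZMod d) : ec d x ≠ 0 := pow_ne_zero _ (omega_ne_zero d)

lemma ec_neg (x : ZMod d) : ec d (-x) = (ec d x)⁻¹ :=
  eq_inv_of_mul_eq_one_right (by rw [← ec_add, add_neg_cancel, ec_zero])

lemma conj_ec (x : ZMod d) : (starRingEnd ℂ) (ec d x) = (ec d x)⁻¹ := by
  rw [ec, map_pow, conj_omega, inv_pow]

lemma sum_val_pow (ζ : ℂ) : ∑ x : ZMod d, ζ ^ x.val = ∑ i ∈ Finset.range d, ζ ^ i := by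
  refine Finset.sum_bij' (fun x _ => x.val) (fun i _ => (i : ZMod d)) ?_ ?_ ?_ ?_ ?_
  · intro a _; exact Finset.mem_range.mpr a.val_lt
  · intro i _; exact Finset.mem_univ _
  · intro a _; exact ZMod.natCast_rightInverse a
  · intro i hi; exact ZMod.val_natCast_of_lt (Finset.mem_range.mp hi)
  · intro a _; rfl

lemma ec_sum (hd : d.Prime) (a : ZMod d) :
    ∑ x : ZMod d, ec d (a * x) = if a = 0 then (d : ℂ) else 0 := by
  by_cases ha : a = 0
  · simp [ha, ec_zero, Finset.card_univ, ZMod.card]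
  · rw [if_neg ha]
    have hterm : ∀ x : ZMod d, ec d (a * x) = (omega_d d ^ a.val) ^ x.val := by
      intro x
      rw [ec, ZMod.val_mul, omega_pow_mod, pow_mul]
    simp_rw [hterm]
    rw [sum_val_pow]
    have haval : 0 < a.val := Nat.pos_of_ne_zero (fun h => ha ((ZMod.val_eq_zero a).mp h))
    have hζ : omega_d d ^ a.val ≠ 1 :=
      (omega_prim d).pow_ne_one_of_pos_of_lt haval.ne' a.val_lt
    rw [geom_sum_eq hζ]
    rw [← pow_mul, mul_comm, pow_mul, omega_pow_d, one_pow]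
    simp

lemma Xpow_apply (n : ℕ) (k l : ZMod d) :
    (Xmat d ^ n) k l = if k = l + (n : ZMod d) then 1 else 0 := by
  induction n generalizing l with
  | zero => simp [Matrix.one_apply]
  | succ n ih =>
    rw [pow_succ, Matrix.mul_apply]
    have hX : ∀ j : ZMod d, Xmat d j l = if j = l + 1 then (1 : ℂ) else 0 := fun j => rfl
    simp only [hX, mul_ite, mul_one, mul_zero]
    rw [Finset.sum_ite_eq' Finset.univ (l + 1) (fun j => (Xmat d ^ n) k j)]
    simp only [Finset.mem_univ, if_true, ih (l + 1)]
    have h : (l + 1) + (n : ZMod d) = l + ((n + 1 : ℕ) : ZMod d) := by push_cast; ring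
    rw [h]

lemma weyl_apply (p q k m : ZMod d) :
    weyl d p q k m
      = if k = m + q then
          omega_d d ^ ((-(2⁻¹ : ZMod d) * p * q).val) * ec d (p * k)
        else 0 := by
  rw [weyl, Matrix.smul_apply, Zmat, Matrix.diagonal_pow, Matrix.diagonal_mul, Xpow_apply]
  have hq : ((q.val : ℕ) : ZMod d) = q := ZMod.natCast_rightInverse q
  have hval : (omega_d d ^ k.val) ^ p.val = ec d (p * k) := by
    rw [← pow_mul]
    have : ec d (p * k) = omega_d d ^ (p.val * k.val) := by
      rw [ec, ZMod.val_mul, omega_pow_mod]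
    rw [this, mul_comm k.val p.val]
  rw [hq, Pi.pow_apply, hval, smul_eq_mul]
  by_cases h : k = m + q <;> simp [h]

lemma conj_phase (p q : ZMod d) :
    omega_d d ^ ((-(2⁻¹ : ZMod d) * p * q).val)
      * star (omega_d d ^ ((-(2⁻¹ : ZMod d) * p * q).val)) = 1 := by
  rw [← starRingEnd_apply, map_pow, conj_omega, inv_pow]
  exact mul_inv_cancel₀ (pow_ne_zero _ (omega_ne_zero d))

lemma phasePoint_apply (p q k l : ZMod d) :
    phasePoint d p q k l = if k + l = 2 * q then ec d (p * (k - l)) else 0 := by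
  have hWA : ∀ m : ZMod d, (weyl d p q * Amat d) k m = weyl d p q k (-m) := by
    intro m
    rw [Matrix.mul_apply]
    have hAm : ∀ j : ZMod d, Amat d j m = if j = -m then (1 : ℂ) else 0 := fun j => rfl
    simp only [hAm, mul_ite, mul_one, mul_zero]
    rw [Finset.sum_ite_eq' Finset.univ (-m) (fun j => weyl d p q k j)]
    simp
  rw [phasePoint, Matrix.mul_apply]
  simp only [hWA, Matrix.conjTranspose_apply]
  have hterm : ∀ m : ZMod d,
      weyl d p q k (-m) * star (weyl d p q l m)
        = if m = l - q then (if k + l = 2 * q then ec d (p * (k - l)) else 0) else 0 := by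
    intro m
    rw [weyl_apply, weyl_apply]
    by_cases hm : m = l - q
    · subst hm
      rw [if_pos (show l = (l - q) + q by ring), if_pos rfl]
      by_cases hk : k + l = 2 * q
      · rw [if_pos (show k = -(l - q) + q by linear_combination hk), if_pos hk]
        have hval : ec d (p * (k - l)) = ec d (p * k) * (ec d (p * l))⁻¹ := by
          rw [← ec_neg, ← ec_add]
          congr 1
          ring
        rw [hval, star_mul']
        have hc := conj_phase d p q
        have hse : star (ec d (p * l)) = (ec d (p * l))⁻¹ := by
          rw [← starRingEnd_apply, conj_ec]
        rw [hse]
        linear_combination (ec d (p * k) * (ec d (p * l))⁻¹) * hc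
      · rw [if_neg (show ¬ k = -(l - q) + q from fun hc => hk (by linear_combination hc)),
          zero_mul, if_neg hk]
    · rw [if_neg (show ¬ l = m + q from fun hc => hm (by linear_combination -hc)),
        star_zero, mul_zero, if_neg hm]
  simp only [hterm]
  rw [Finset.sum_ite_eq' Finset.univ (l - q)]
  simp

end Aux

lemma two_ne_zero_zmod (d : ℕ) [NeZero d] (hd : d.Prime) (hodd : Odd d) :
    (2 : ZMod d) ≠ 0 := by
  intro h
  have h2 : ((2 : ℕ) : ZMod d) = 0 := by exact_mod_cast h
  have hdvd : d ∣ 2 := (ZMod.natCast_eq_zero_iff 2 d).mp h2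
  rcases (Nat.prime_two.eq_one_or_self_of_dvd d hdvd) with h1 | h2'
  · exact hd.one_lt.ne' h1
  · rw [h2'] at hodd
    exact (Nat.not_odd_iff_even.mpr (by norm_num)) hodd

theorem stmt10 (d : ℕ) [NeZero d] (hd : d.Prime) (hodd : Odd d) :
    (∀ p q : ZMod d, (phasePoint d p q).IsHermitian) ∧
    (∀ p q p' q' : ZMod d,
      (1 / (d : ℂ)) * (phasePoint d p q * phasePoint d p' q').trace
        = if p = p' ∧ q = q' then 1 else 0) := by
  haveI : Fact d.Prime := ⟨hd⟩
  have hA : (Amat d).IsHermitian := by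
    ext k l
    simp only [Matrix.conjTranspose_apply, Amat, Matrix.of_apply]
    have hiff : (l = -k) ↔ (k = -l) := by
      constructor <;> intro h <;> linear_combination h
    rw [apply_ite star, star_zero, star_one, if_congr hiff rfl rfl]
  have h2 : (2 : ZMod d) ≠ 0 := two_ne_zero_zmod d hd hodd
  constructor
  · intro p q
    exact Matrix.isHermitian_mul_mul_conjTranspose _ hA
  · intro p q p' q'
    have htr : (phasePoint d p q * phasePoint d p' q').trace
        = ∑ k : ZMod d, ∑ l : ZMod d, phasePoint d p q k l * phasePoint d p' q' l k := by
      rw [Matrix.trace]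
      simp [Matrix.mul_apply, Matrix.diag]
    rw [htr]
    simp only [phasePoint_apply]
    have hiff : ∀ k l : ZMod d, (k + l = 2 * q) ↔ (l = 2 * q - k) := by
      intro k l; constructor <;> intro h <;> linear_combination h
    have hsum : ∀ k : ZMod d,
        (∑ l : ZMod d, (if k + l = 2 * q then ec d (p * (k - l)) else 0)
          * (if l + k = 2 * q' then ec d (p' * (l - k)) else 0))
        = if 2 * q = 2 * q' then
            ec d (p * (k - (2 * q - k))) * ec d (p' * ((2 * q - k) - k)) else 0 := by
      intro k
      simp only [hiff, ite_mul, zero_mul]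
      rw [Finset.sum_ite_eq' Finset.univ (2 * q - k)]
      simp only [Finset.mem_univ, if_true]
      have hc : (2 * q - k + k = 2 * q') ↔ (2 * q = 2 * q') := by
        constructor <;> intro h <;> linear_combination h
      rw [mul_ite, mul_zero, if_congr hc rfl rfl]
    simp only [hsum]
    by_cases hq : q = q'
    · subst hq
      have hterm : ∀ k : ZMod d,
          ec d (p * (k - (2 * q - k))) * ec d (p' * ((2 * q - k) - k))
            = ec d ((2 * (p - p')) * (k - q)) := by
        intro k
        rw [← ec_add]
        congr 1
        ring
      simp only [hterm, eq_self_iff_true, if_true, and_true]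
      have hre : ∑ k : ZMod d, ec d ((2 * (p - p')) * (k - q))
          = ∑ m : ZMod d, ec d ((2 * (p - p')) * m) :=
        Fintype.sum_equiv (Equiv.subRight q) _ _ (fun k => rfl)
      rw [hre, ec_sum d hd]
      have hcond : (2 * (p - p') = 0) ↔ (p = p') := by
        rw [mul_eq_zero, sub_eq_zero]
        simp [h2]
      by_cases hp : p = p'
      · rw [if_pos (hcond.mpr hp), if_pos hp]
        have hdne : (d : ℂ) ≠ 0 := Nat.cast_ne_zero.mpr (NeZero.ne d)
        field_simp
      · rw [if_neg (fun h => hp (hcond.mp h)), if_neg hp, mul_zero]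
    · have hq2 : ¬ (2 * q = 2 * q') := fun h => hq (mul_left_cancel₀ h2 h)
      simp only [if_neg hq2, Finset.sum_const_zero, mul_zero]
      rw [if_neg (fun h => hq h.2)]
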